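/- Let A, B, Y be binary random variables with A and B independent and all conditioning events having positive probability. Then P(Y=1|A=1) − P(Y=1|A=0) = [P(Y=1|A=1,B=0) − P(Y=1|A=0,B=0)] + P(B=1)·Int(A,B), where Int(A,B) = P(Y=1|A=1,B=1) − P(Y=1|A=0,B=1) − P(Y=1|A=1,B=0) + P(Y=1|A=0,B=0). -/

import Mathlib

open MeasureTheory

/-- Probability of an event, as a real number. -/
noncomputable def prb {Ω : Type*} [MeasurableSpace Ω] (μ : Measure Ω) (s : Set Ω) : ℝ :=
  (μ s).toReal

/-- Conditional probability P(s | t) as a real number. -/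
noncomputable def cprb {Ω : Type*} [MeasurableSpace Ω] (μ : Measure Ω) (s t : Set Ω) : ℝ :=
  prb μ (s ∩ t) / prb μ t

lemma prb_split {Ω : Type*} [MeasurableSpace Ω] (μ : Measure Ω) [IsProbabilityMeasure μ]
    (s t : Set Ω) (ht : MeasurableSet t) :
    prb μ s = prb μ (s ∩ t) + prb μ (s ∩ tᶜ) := by
  have h := measure_inter_add_diff (μ := μ) s ht
  unfold prb
  rw [← Set.diff_eq, ← ENNReal.toReal_add (measure_ne_top μ _) (measure_ne_top μ _), h]

lemma prb_ne_zero {Ω : Type*} [MeasurableSpace Ω] (μ : Measure Ω) [IsProbabilityMeasure μ]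
    (s : Set Ω) (hs : μ s ≠ 0) : prb μ s ≠ 0 := by
  simp [prb, ENNReal.toReal_ne_zero, hs, measure_ne_top μ s]

/-- With `A` and `B` independent, the statistical disparity w.r.t. `A` decomposes into the
interaction-free disparity plus `P(B=1)` times the additive interaction term. -/
theorem stmt17 {Ω : Type*} [MeasurableSpace Ω] (μ : Measure Ω) [IsProbabilityMeasure μ]
    (A B Y : Set Ω) (hAm : MeasurableSet A) (hBm : MeasurableSet B) (hYm : MeasurableSet Y)
    (hind : prb μ (A ∩ B) = prb μ A * prb μ B)
    (hA : μ A ≠ 0) (hAc : μ Aᶜ ≠ 0)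
    (h1 : μ (A ∩ B) ≠ 0) (h2 : μ (A ∩ Bᶜ) ≠ 0)
    (h3 : μ (Aᶜ ∩ B) ≠ 0) (h4 : μ (Aᶜ ∩ Bᶜ) ≠ 0) :
    cprb μ Y A - cprb μ Y Aᶜ =
      (cprb μ Y (A ∩ Bᶜ) - cprb μ Y (Aᶜ ∩ Bᶜ)) +
      prb μ B *
        (cprb μ Y (A ∩ B) - cprb μ Y (Aᶜ ∩ B) - cprb μ Y (A ∩ Bᶜ) + cprb μ Y (Aᶜ ∩ Bᶜ)) := by
  -- abbreviations
  set pB := prb μ B with hpB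
  set pA := prb μ A with hpA
  -- splits
  have hYA : prb μ (Y ∩ A) = prb μ (Y ∩ A ∩ B) + prb μ (Y ∩ A ∩ Bᶜ) := by
    simpa [Set.inter_assoc] using prb_split μ (Y ∩ A) B hBm
  have hYAc : prb μ (Y ∩ Aᶜ) = prb μ (Y ∩ Aᶜ ∩ B) + prb μ (Y ∩ Aᶜ ∩ Bᶜ) := by
    simpa [Set.inter_assoc] using prb_split μ (Y ∩ Aᶜ) B hBm
  have hAs : pA = prb μ (A ∩ B) + prb μ (A ∩ Bᶜ) := prb_split μ A B hBm
  have hBs : pB = prb μ (B ∩ A) + prb μ (B ∩ Aᶜ) := prb_split μ B A hAm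
  have hAcs : prb μ Aᶜ = prb μ (Aᶜ ∩ B) + prb μ (Aᶜ ∩ Bᶜ) := prb_split μ Aᶜ B hBm
  have hAAc : pA + prb μ Aᶜ = 1 := by
    have h := prb_split μ Set.univ A hAm
    simp only [Set.univ_inter] at h
    have h1 : prb μ (Set.univ : Set Ω) = 1 := by simp [prb]
    rw [h1] at h; rw [hpA]; linarith
  -- product forms
  have hABc : prb μ (A ∩ Bᶜ) = pA * (1 - pB) := by
    have := hAs; rw [hind] at this; linarith [this]
  have hAcB : prb μ (Aᶜ ∩ B) = (1 - pA) * pB := by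
    have h' : prb μ (B ∩ A) = prb μ (A ∩ B) := by rw [Set.inter_comm]
    have h'' : prb μ (B ∩ Aᶜ) = prb μ (Aᶜ ∩ B) := by rw [Set.inter_comm]
    rw [h', h''] at hBs
    rw [hind] at hBs; nlinarith [hBs]
  have hAcBc : prb μ (Aᶜ ∩ Bᶜ) = (1 - pA) * (1 - pB) := by
    have hAc1 : prb μ Aᶜ = 1 - pA := by linarith
    rw [hAc1, hAcB] at hAcs; linarith
  -- nonzero denominators
  have hApos : pA ≠ 0 := prb_ne_zero μ A hA
  have hAcpos : prb μ Aᶜ ≠ 0 := prb_ne_zero μ Aᶜ hAc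
  have h1' : prb μ (A ∩ B) ≠ 0 := prb_ne_zero μ _ h1
  have h2' : prb μ (A ∩ Bᶜ) ≠ 0 := prb_ne_zero μ _ h2
  have h3' : prb μ (Aᶜ ∩ B) ≠ 0 := prb_ne_zero μ _ h3
  have h4' : prb μ (Aᶜ ∩ Bᶜ) ≠ 0 := prb_ne_zero μ _ h4
  have hAc1 : prb μ Aᶜ = 1 - pA := by linarith
  have hpBne : (1 : ℝ) - pB ≠ 0 := by
    intro h; apply h2'; rw [hABc, h, mul_zero]
  have hpBne' : pB ≠ 0 := by
    intro h; apply h1'; rw [hind, h, mul_zero]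
  have hpAne : (1 : ℝ) - pA ≠ 0 := by
    intro h; apply h3'; rw [hAcB, h, zero_mul]
  unfold cprb
  simp only [← Set.inter_assoc]
  rw [hYA, hYAc, hAc1, hABc, hAcB, hAcBc, hind]
  rw [← hpA]
  field_simp
  ring
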